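/- Let d ≥ 1, α ∈ T^d = (ℝ/ℤ)^d, and let F₁, …, F_h be a natural measurable partition of T^d such that the associated subshift X ⊆ {1,…,h}^ℤ is a natural coding of the translation R_α (i.e., for every x ∈ X the set ⋂_{n∈ℕ} closure(⋂_{k=0}^{n} R_α^{-k}(interior F_{x_k})) is a singleton). Then for every continuous f : T^d → ℝ and every ε > 0 there exist n ∈ ℕ and real coefficients (a_w) indexed by the words w of length n+1 in the language L(F) such that, for Haar-almost every ω ∈ T^d, |f(ω) − Σ_w a_w·1_{F_w}(ω)| < ε, where F_w := ⋂_{k=0}^{n} R_α^{-k} F_{w_k}. In particular, the algebra generated by the indicator functions {1_{F_w} : w ∈ L(F)} has L^∞-closure containing all continuous functions on T^d. -/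

import Mathlib

open MeasureTheory
open scoped Classical

noncomputable section

/-- The `d`-dimensional torus `T^d = (ℝ/ℤ)^d`. -/
abbrev Torus (d : ℕ) := Fin d → AddCircle (1 : ℝ)

/-- A word `w` of length `m` over `{1,…,h}` belongs to the language of the partition
`F` under the translation `R_α` if `⋂_{k<m} R_α^{-k}(interior F_{w_k}) ≠ ∅`. -/
def LangWord {d h : ℕ} (α : Torus d) (F : Fin h → Set (Torus d)) {m : ℕ}
    (w : Fin m → Fin h) : Prop :=
  (⋂ k : Fin m, (fun ω : Torus d => ω + (k : ℕ) • α) ⁻¹' interior (F (w k))).Nonempty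

namespace Stmt13Aux

/-- The interior cell of length `n+1` determined by a bi-infinite word `x`. -/
def Cell {d h : ℕ} (α : Torus d) (F : Fin h → Set (Torus d)) (x : ℤ → Fin h) (n : ℕ) :
    Set (Torus d) :=
  ⋂ k : Fin (n + 1), (fun ω' : Torus d => ω' + (k : ℕ) • α) ⁻¹' interior (F (x (k : ℕ)))

theorem cell_antitone {d h : ℕ} (α : Torus d) (F : Fin h → Set (Torus d)) (x : ℤ → Fin h)
    {n m : ℕ} (hnm : n ≤ m) : Cell α F x m ⊆ Cell α F x n := by
  intro ω hω
  simp only [Cell, Set.mem_iInter] at *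
  intro k
  exact hω ⟨(k : ℕ), lt_of_lt_of_le k.2 (by omega)⟩

theorem ultra_exists_fiber {ι : Type*} [Finite ι] (U : Ultrafilter ℕ) (g : ℕ → ι) :
    ∃ v : ι, {n | g n = v} ∈ U := by
  by_contra hc
  push_neg at hc
  have h1 : (⋂ v : ι, {n | g n = v}ᶜ) ∈ U :=
    (Filter.iInter_mem).mpr fun v => (Ultrafilter.compl_mem_iff_notMem).mpr (hc v)
  obtain ⟨n, hn⟩ := Filter.nonempty_of_mem h1
  exact (Set.mem_iInter.mp hn (g n)) rfl

end Stmt13Aux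

open Stmt13Aux in
/-- if the subshift associated to a natural measurable partition is a
natural coding of `R_α`, then every continuous function is a.e. `ε`-approximated by a
finite linear combination of indicators of the refined cells `F_w`, `w ∈ L(F)`. -/
theorem stmt13 (d h : ℕ) (hd : 1 ≤ d) (α : Torus d) (F : Fin h → Set (Torus d))
    (hcover : (⋃ i, F i) = Set.univ)
    (hdisj : ∀ i j : Fin h, i ≠ j → volume (F i ∩ F j) = 0)
    (hmeas : ∀ i, MeasurableSet (F i))
    (hdense : ∀ i, F i ⊆ closure (interior (F i)))
    (hbdry : ∀ i, volume (frontier (F i)) = 0)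
    (hcoding : ∀ x : ℤ → Fin h,
      (∀ (m : ℤ) (n : ℕ), LangWord α F fun i : Fin (n + 1) => x (m + (i : ℕ))) →
      ∃! ω : Torus d, ω ∈ ⋂ n : ℕ,
        closure (⋂ k : Fin (n + 1),
          (fun ω' : Torus d => ω' + (k : ℕ) • α) ⁻¹' interior (F (x (k : ℕ)))))
    (f : Torus d → ℝ) (hf : Continuous f) (ε : ℝ) (hε : 0 < ε) :
    ∃ (n : ℕ) (a : (Fin (n + 1) → Fin h) → ℝ),
      ∀ᵐ ω ∂(volume : Measure (Torus d)),
        |f ω - ∑ w ∈ Finset.univ.filter (fun w : Fin (n + 1) → Fin h => LangWord α F w),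
          a w * Set.indicator
            (⋂ k : Fin (n + 1), (fun ω' : Torus d => ω' + (k : ℕ) • α) ⁻¹' F (w k))
            (fun _ => (1 : ℝ)) ω| < ε := by
  classical
  -- interiors of distinct pieces are disjoint
  have hint_disj : ∀ i j : Fin h, i ≠ j → interior (F i) ∩ interior (F j) = ∅ := by
    intro i j hij
    by_contra hne
    have hopen : IsOpen (interior (F i) ∩ interior (F j)) :=
      isOpen_interior.inter isOpen_interior
    have hpos : 0 < volume (interior (F i) ∩ interior (F j)) :=
      hopen.measure_pos volume (Set.nonempty_iff_ne_empty.mpr hne)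
    have hle : volume (interior (F i) ∩ interior (F j)) ≤ volume (F i ∩ F j) :=
      measure_mono (Set.inter_subset_inter interior_subset interior_subset)
    rw [hdisj i j hij] at hle
    exact hpos.ne' (le_antisymm hle zero_le)
  -- the null set of non-generic points
  set Bad : Set (Torus d) :=
    ⋃ (m : ℤ) (i : Fin h), (fun ω : Torus d => ω + m • α) ⁻¹' frontier (F i) with hBadDef
  have hBadnull : volume Bad = 0 := by
    refine measure_iUnion_null fun m => measure_iUnion_null fun i => ?_
    rw [measure_preimage_add_right]
    exact hbdry i
  -- generic points have a coding
  have hgood : ∀ ω : Torus d, ω ∉ Bad → ∀ m : ℤ, ∃ i, ω + m • α ∈ interior (F i) := by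
    intro ω hω m
    have h1 : ω + m • α ∈ ⋃ i, F i := hcover ▸ Set.mem_univ _
    obtain ⟨i, hi⟩ := Set.mem_iUnion.mp h1
    refine ⟨i, ?_⟩
    have hnf : ω + m • α ∉ frontier (F i) := fun hc =>
      hω (Set.mem_iUnion.mpr ⟨m, Set.mem_iUnion.mpr ⟨i, hc⟩⟩)
    by_contra hni
    exact hnf ⟨subset_closure hi, hni⟩
  have huniq : ∀ ω : Torus d, ω ∉ Bad → ∀ m : ℤ, ∀ i j : Fin h,
      ω + m • α ∈ F i → ω + m • α ∈ interior (F j) → i = j := by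
    intro ω hω m i j hi hj
    by_contra hij
    have hnf : ω + m • α ∉ frontier (F i) := fun hc =>
      hω (Set.mem_iUnion.mpr ⟨m, Set.mem_iUnion.mpr ⟨i, hc⟩⟩)
    have hii : ω + m • α ∈ interior (F i) := by
      by_contra hni
      exact hnf ⟨subset_closure hi, hni⟩
    have h0 := hint_disj i j hij
    exact absurd (Set.mem_inter hii hj) (by rw [h0]; exact Set.notMem_empty _)
  choose code hcode using hgood
  -- the coding of a generic point lies in the subshift
  have hlang : ∀ (ω : Torus d) (hω : ω ∉ Bad) (m : ℤ) (n : ℕ),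
      LangWord α F (fun i : Fin (n + 1) => code ω hω (m + (i : ℕ))) := by
    intro ω hω m n
    refine ⟨ω + m • α, Set.mem_iInter.mpr fun k => ?_⟩
    show ω + m • α + (k : ℕ) • α ∈ interior (F (code ω hω (m + (k : ℕ))))
    have he : ω + m • α + (k : ℕ) • α = ω + (m + (k : ℕ)) • α := by
      rw [add_zsmul, add_assoc, natCast_zsmul]
    rw [he]
    exact hcode ω hω _
  -- uniform continuity of f
  obtain ⟨δ, hδ, hδf⟩ :=
    Metric.uniformContinuous_iff.mp (CompactSpace.uniformContinuous_of_continuous hf) ε hε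
  -- KEY: there is a level `n` at which all language cells have small closure
  have key : ∃ n : ℕ, ∀ w : Fin (n + 1) → Fin h, LangWord α F w →
      Metric.diam (closure (⋂ k : Fin (n + 1),
        (fun ω' : Torus d => ω' + (k : ℕ) • α) ⁻¹' interior (F (w k)))) < δ := by
    by_contra hcon
    push_neg at hcon
    choose w hw hdiam using hcon
    -- pick a generic point in each cell
    have hpick : ∀ n : ℕ, ∃ ω : Torus d, ω ∉ Bad ∧
        ω ∈ ⋂ k : Fin (n + 1),
          (fun ω' : Torus d => ω' + (k : ℕ) • α) ⁻¹' interior (F (w n k)) := by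
      intro n
      have hopen : IsOpen (⋂ k : Fin (n + 1),
          (fun ω' : Torus d => ω' + (k : ℕ) • α) ⁻¹' interior (F (w n k))) :=
        isOpen_iInter_of_finite fun k =>
          isOpen_interior.preimage (continuous_add_right _)
      have hpos := hopen.measure_pos volume (hw n)
      by_contra hc
      push_neg at hc
      have hsub : (⋂ k : Fin (n + 1),
          (fun ω' : Torus d => ω' + (k : ℕ) • α) ⁻¹' interior (F (w n k))) ⊆ Bad := by
        intro ω hω
        by_contra hb
        exact hc ω hb hω
      have hle := measure_mono (μ := (volume : Measure (Torus d))) hsub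
      rw [hBadnull] at hle
      exact hpos.ne' (le_antisymm hle zero_le)
    choose ωn hωnB hωnC using hpick
    -- the coding of `ωn n` agrees with `w n` on the window `0..n`
    have hagree : ∀ n (k : Fin (n + 1)), code (ωn n) (hωnB n) ((k : ℕ) : ℤ) = w n k := by
      intro n k
      have h1 : ωn n + ((k : ℕ) : ℤ) • α ∈ interior (F (w n k)) := by
        have h2 := Set.mem_iInter.mp (hωnC n) k
        rwa [natCast_zsmul]
      exact (huniq (ωn n) (hωnB n) _ _ _ (interior_subset h1)
        (hcode (ωn n) (hωnB n) _)).symm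
    -- ultralimit of the codings
    set U := Filter.hyperfilter ℕ with hU
    have hxex : ∀ m : ℤ, ∃ v : Fin h, {n | code (ωn n) (hωnB n) m = v} ∈ U :=
      fun m => ultra_exists_fiber U fun n => code (ωn n) (hωnB n) m
    choose x hx using hxex
    -- agreement on finite windows, beyond any bound
    have hfin : ∀ (S : Finset ℤ) (N : ℕ), ∃ n, N ≤ n ∧
        ∀ m ∈ S, code (ωn n) (hωnB n) m = x m := by
      intro S N
      have h1 : (⋂ m ∈ S, {n | code (ωn n) (hωnB n) m = x m}) ∈ U :=
        (Filter.biInter_mem S.finite_toSet).mpr fun m _ => hx m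
      have h2 : {n : ℕ | N ≤ n} ∈ U := by
        refine Filter.mem_hyperfilter_of_finite_compl ?_
        have : {n : ℕ | N ≤ n}ᶜ ⊆ Set.Iio N := by
          intro n hn
          simpa using hn
        exact (Set.finite_Iio N).subset this
      obtain ⟨n, hn⟩ := Filter.nonempty_of_mem (Filter.inter_mem h2 h1)
      exact ⟨n, hn.1, fun m hm => Set.mem_iInter₂.mp hn.2 m hm⟩
    -- x lies in the subshift
    have hxX : ∀ (m : ℤ) (n : ℕ), LangWord α F fun i : Fin (n + 1) => x (m + (i : ℕ)) := by
      intro m n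
      obtain ⟨n', -, hn'⟩ := hfin (Finset.image (fun i : ℕ => m + (i : ℤ)) (Finset.range (n + 1))) 0
      have heq : (fun i : Fin (n + 1) => x (m + (i : ℕ)))
          = fun i : Fin (n + 1) => code (ωn n') (hωnB n') (m + (i : ℕ)) := by
        funext i
        exact (hn' _ (Finset.mem_image.mpr ⟨(i : ℕ), Finset.mem_range.mpr i.2, rfl⟩)).symm
      rw [heq]
      exact hlang (ωn n') (hωnB n') m n
    -- all cells of x have large closures
    have hdiamx : ∀ n : ℕ, δ ≤ Metric.diam (closure (Cell α F x n)) := by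
      intro n
      obtain ⟨n', hn'N, hn'⟩ :=
        hfin (Finset.image (fun i : ℕ => (i : ℤ)) (Finset.range (n + 1))) n
      have hsub : (⋂ k : Fin (n' + 1),
          (fun ω' : Torus d => ω' + (k : ℕ) • α) ⁻¹' interior (F (w n' k)))
          ⊆ Cell α F x n := by
        intro ω hω
        refine Set.mem_iInter.mpr fun k => ?_
        have hk : (k : ℕ) < n' + 1 := lt_of_lt_of_le k.2 (by omega)
        have h1 := Set.mem_iInter.mp hω ⟨(k : ℕ), hk⟩
        have h2 : x ((k : ℕ) : ℤ) = w n' ⟨(k : ℕ), hk⟩ := by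
          rw [← hn' ((k : ℕ) : ℤ)
            (Finset.mem_image.mpr ⟨(k : ℕ), Finset.mem_range.mpr k.2, rfl⟩)]
          exact hagree n' ⟨(k : ℕ), hk⟩
        show ω + (k : ℕ) • α ∈ interior (F (x ((k : ℕ) : ℤ)))
        rw [h2]
        exact h1
      calc δ ≤ Metric.diam (closure (⋂ k : Fin (n' + 1),
              (fun ω' : Torus d => ω' + (k : ℕ) • α) ⁻¹' interior (F (w n' k)))) :=
            hdiam n'
        _ ≤ Metric.diam (closure (Cell α F x n)) :=
            Metric.diam_mono (closure_mono hsub) Metric.isBounded_of_compactSpace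
    -- pick pairs of far-apart points in each cell closure
    have hpair : ∀ n : ℕ, ∃ p q : Torus d, p ∈ closure (Cell α F x n) ∧
        q ∈ closure (Cell α F x n) ∧ δ / 2 ≤ dist p q := by
      intro n
      by_contra hc
      push_neg at hc
      have hle : Metric.diam (closure (Cell α F x n)) ≤ δ / 2 :=
        Metric.diam_le_of_forall_dist_le (by linarith)
          fun p hp q hq => le_of_lt (hc p q hp hq)
      linarith [hdiamx n]
    choose pn qn hpn hqn hpqn using hpair
    -- extract a convergent subsequence of the pairs
    obtain ⟨z, -, φ, hφ, hz⟩ := isCompact_univ.tendsto_subseq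
      (fun n => Set.mem_univ ((pn n, qn n) : Torus d × Torus d))
    have hp1 : Filter.Tendsto (fun j => pn (φ j)) Filter.atTop (nhds z.1) :=
      (continuous_fst.tendsto z).comp hz
    have hq1 : Filter.Tendsto (fun j => qn (φ j)) Filter.atTop (nhds z.2) :=
      (continuous_snd.tendsto z).comp hz
    have hmem : ∀ m : ℕ, z.1 ∈ closure (Cell α F x m) ∧ z.2 ∈ closure (Cell α F x m) := by
      intro m
      constructor
      · refine isClosed_closure.mem_of_tendsto hp1
          (Filter.eventually_atTop.mpr ⟨m, fun j hj => ?_⟩)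
        exact closure_mono (cell_antitone α F x (le_trans hj (hφ.le_apply))) (hpn (φ j))
      · refine isClosed_closure.mem_of_tendsto hq1
          (Filter.eventually_atTop.mpr ⟨m, fun j hj => ?_⟩)
        exact closure_mono (cell_antitone α F x (le_trans hj (hφ.le_apply))) (hqn (φ j))
    have hdistz : δ / 2 ≤ dist z.1 z.2 :=
      ge_of_tendsto' (hp1.dist hq1) fun j => hpqn (φ j)
    obtain ⟨ω₀, hω₀, huni⟩ := hcoding x hxX
    have h1 : z.1 = ω₀ := huni z.1 (Set.mem_iInter.mpr fun m => (hmem m).1)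
    have h2 : z.2 = ω₀ := huni z.2 (Set.mem_iInter.mpr fun m => (hmem m).2)
    rw [h1, h2, dist_self] at hdistz
    linarith
  obtain ⟨n, hn⟩ := key
  -- choose a base point in each language cell
  set pt : (Fin (n + 1) → Fin h) → Torus d := fun w =>
    if hw : (⋂ k : Fin (n + 1),
        (fun ω' : Torus d => ω' + (k : ℕ) • α) ⁻¹' interior (F (w k))).Nonempty
    then hw.some else Classical.arbitrary _ with hptDef
  refine ⟨n, fun w => f (pt w), ?_⟩
  have hae : ∀ᵐ ω ∂(volume : Measure (Torus d)), ω ∉ Bad := by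
    rw [ae_iff]
    simpa using hBadnull
  filter_upwards [hae] with ω hω
  -- the word of ω
  set wω : Fin (n + 1) → Fin h := fun k => code ω hω ((k : ℕ) : ℤ) with hwωDef
  have hωcell : ω ∈ ⋂ k : Fin (n + 1),
      (fun ω' : Torus d => ω' + (k : ℕ) • α) ⁻¹' interior (F (wω k)) := by
    refine Set.mem_iInter.mpr fun k => ?_
    show ω + (k : ℕ) • α ∈ interior (F (wω k))
    have := hcode ω hω ((k : ℕ) : ℤ)
    rwa [natCast_zsmul] at this
  have hlangω : LangWord α F wω := ⟨ω, hωcell⟩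
  -- membership characterization
  have hchar : ∀ w' : Fin (n + 1) → Fin h,
      (ω ∈ ⋂ k : Fin (n + 1),
        (fun ω' : Torus d => ω' + (k : ℕ) • α) ⁻¹' F (w' k)) ↔ w' = wω := by
    intro w'
    constructor
    · intro hmem'
      funext k
      have h1 : ω + ((k : ℕ) : ℤ) • α ∈ F (w' k) := by
        have := Set.mem_iInter.mp hmem' k
        rwa [natCast_zsmul]
      exact huniq ω hω _ _ _ h1 (hcode ω hω _)
    · intro he
      subst he
      exact Set.iInter_mono (fun k => Set.preimage_mono interior_subset) hωcell
  -- the sum collapses to a single term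
  have hsum : (∑ w' ∈ Finset.univ.filter (fun w' : Fin (n + 1) → Fin h => LangWord α F w'),
      f (pt w') * Set.indicator
        (⋂ k : Fin (n + 1), (fun ω' : Torus d => ω' + (k : ℕ) • α) ⁻¹' F (w' k))
        (fun _ => (1 : ℝ)) ω) = f (pt wω) := by
    rw [Finset.sum_eq_single_of_mem wω
      (Finset.mem_filter.mpr ⟨Finset.mem_univ _, hlangω⟩)]
    · rw [Set.indicator_of_mem ((hchar wω).mpr rfl), mul_one]
    · intro w' _ hne
      rw [Set.indicator_of_notMem (fun hc => hne ((hchar w').mp hc)), mul_zero]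
  rw [hsum]
  -- the estimate
  have hlangω' : (⋂ k : Fin (n + 1),
      (fun ω' : Torus d => ω' + (k : ℕ) • α) ⁻¹' interior (F (wω k))).Nonempty := ⟨ω, hωcell⟩
  have hpt : pt wω ∈ closure (⋂ k : Fin (n + 1),
      (fun ω' : Torus d => ω' + (k : ℕ) • α) ⁻¹' interior (F (wω k))) := by
    have hpteq : pt wω = hlangω'.some := by
      simp only [hptDef]
      rw [dif_pos hlangω']
    rw [hpteq]
    exact subset_closure hlangω'.some_mem
  have hdist : dist ω (pt wω) < δ :=
    lt_of_le_of_lt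
      (Metric.dist_le_diam_of_mem Metric.isBounded_of_compactSpace
        (subset_closure hωcell) hpt)
      (hn wω hlangω)
  have := hδf hdist
  rwa [Real.dist_eq] at this
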